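/- arXiv:1311.0185 — 3 statements merged into one kernel-verified Lean document; each statement's English description precedes it below -/
import Mathlib

section
/- An infinite word x is rich if and only if every complete first return to a palindromic factor of x is itself a palindrome. -/
open List

/-- The prefix of length `n` of an infinite word `x`. -/
def wordTake {A : Type*} (x : ℕ → A) (n : ℕ) : List A := (List.range n).map x

/-- The finite word `u` occurs in the infinite word `x` at position `i`. -/
def OccursAt {A : Type*} (u : List A) (x : ℕ → A) (i : ℕ) : Prop :=
  (List.range u.length).map (fun k => x (i + k)) = u

/-- `u` is a factor of the infinite word `x`. -/
def IsFactor {A : Type*} (u : List A) (x : ℕ → A) : Prop := ∃ i, OccursAt u x i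

/-- A palindrome is a finite word equal to its reversal. -/
def IsPalindrome {A : Type*} (u : List A) : Prop := u.reverse = u

/-- The number of distinct palindromic factors of a finite word `u`
(including the empty word). -/
noncomputable def palCount {A : Type*} (u : List A) : ℕ :=
  {v : List A | v <:+: u ∧ IsPalindrome v}.ncard

/-- A finite word `u` is rich if it has `|u| + 1` distinct palindromic factors. -/
def RichList {A : Type*} (u : List A) : Prop := palCount u = u.length + 1

/-- An infinite word is rich if all of its factors are rich. -/
def RichWord {A : Type*} (x : ℕ → A) : Prop := ∀ u, IsFactor u x → RichList u

/-- The defect of a finite word. -/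
noncomputable def defect {A : Type*} (u : List A) : ℕ := u.length + 1 - palCount u

/-- An infinite word has finite defect if the defects of its prefixes are bounded. -/
def FiniteDefect {A : Type*} (x : ℕ → A) : Prop :=
  ∃ C, ∀ n, defect (wordTake x n) ≤ C

/-- The extension of a morphism (given by its values on letters) to finite words. -/
def listApply {A B : Type*} (f : A → List B) (w : List A) : List B := w.flatMap f

/-- A morphism is non-erasing if the image of every letter is non-empty. -/
def NonErasing {A B : Type*} (f : A → List B) : Prop := ∀ a, f a ≠ []

/-- `y` is the image of the infinite word `x` under the morphism `f`, i.e. `y = f(x)` :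
the image of every prefix of `x` is a prefix of `y`. -/
def IsMorphicImage {A B : Type*} (f : A → List B) (x : ℕ → A) (y : ℕ → B) : Prop :=
  ∀ k, ∃ n, listApply f (wordTake x k) = wordTake y n

/-- A substitution is primitive if some power `τ^N` (`N ≥ 1`) maps every letter to a word
containing every letter. -/
def Primitive {A : Type*} (τ : A → List A) : Prop :=
  ∃ N : ℕ, 1 ≤ N ∧ ∀ a b : A, b ∈ (listApply τ)^[N] [a]

/-- An infinite word is pure primitive morphic if it is a fixed point of a primitive
substitution. -/
def PurePrimitiveMorphic {A : Type*} (x : ℕ → A) : Prop :=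
  ∃ τ : A → List A, NonErasing τ ∧ Primitive τ ∧ IsMorphicImage τ x x

/-- An infinite word is primitive morphic if it is the morphic image of a pure primitive
morphic word over some finite alphabet. -/
def PrimitiveMorphic {B : Type*} (y : ℕ → B) : Prop :=
  ∃ (A : Type) (_ : Fintype A) (f : A → List B) (x : ℕ → A),
    NonErasing f ∧ PurePrimitiveMorphic x ∧ IsMorphicImage f x y

/-- A morphism is of class P if `f(a) = p qₐ` with `p` and each `qₐ` palindromes. -/
def ClassP {A B : Type*} (f : A → List B) : Prop :=
  ∃ p : List B, IsPalindrome p ∧ ∀ a, ∃ q : List B, IsPalindrome q ∧ f a = p ++ q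

/-- Two morphisms are conjugate if `f(a)u = u g(a)` for all `a`, or `u f(a) = g(a) u`
for all `a`, for some finite word `u`. -/
def Conjugate {A B : Type*} (f g : A → List B) : Prop :=
  ∃ u : List B, (∀ a, f a ++ u = u ++ g a) ∨ (∀ a, u ++ f a = g a ++ u)

/-- Class P' : morphisms conjugate to some class P morphism. -/
def ClassP' {A B : Type*} (f : A → List B) : Prop :=
  ∃ g : A → List B, ClassP g ∧ Conjugate f g

/-- `FP'` : infinite words fixed by some primitive substitution of class P'. -/
def InFPprime {A : Type*} (x : ℕ → A) : Prop :=
  ∃ τ : A → List A, NonErasing τ ∧ Primitive τ ∧ ClassP' τ ∧ IsMorphicImage τ x x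

/-- The number of occurrences of `u` in the finite word `w`. -/
noncomputable def occCount {A : Type*} (u w : List A) : ℕ :=
  {i : ℕ | i + u.length ≤ w.length ∧ (w.drop i).take u.length = u}.ncard

/-- `v` is a first return to the non-empty factor `u` in `x` : `vu` is a factor of `x`
beginning (and ending) in `u` and containing exactly two occurrences of `u`;
`vu` is then the corresponding complete first return to `u`. -/
def FirstReturn {A : Type*} (u : List A) (x : ℕ → A) (v : List A) : Prop :=
  u ≠ [] ∧ IsFactor (v ++ u) x ∧ u <+: (v ++ u) ∧ occCount u (v ++ u) = 2

/-- An infinite word is uniformly recurrent if every factor occurs in every sufficiently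
long factor. -/
def UniformlyRecurrent {A : Type*} (x : ℕ → A) : Prop :=
  ∀ u : List A, IsFactor u x → ∃ n, ∀ v : List A, IsFactor v x → v.length = n → u <:+: v

/-- `d` is the derived word of `x` at the non-empty prefix `u` : `x` factors as a
concatenation `r 0, r 1, r 2, …` of first returns to `u` (each complete first return
`r n ++ u` occurring at the corresponding partial-sum position), and `d n` is the rank
of `r n` in the order of first occurrence, i.e. the number of distinct return words
appearing strictly before the first occurrence of `r n`. -/
def IsDerivedWord {A : Type*} (x : ℕ → A) (u : List A) (d : ℕ → ℕ) : Prop :=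
  ∃ r : ℕ → List A,
    (∀ n, FirstReturn u x (r n)) ∧
    (∀ n, OccursAt (r n ++ u) x (∑ i ∈ Finset.range n, (r i).length)) ∧
    (∀ n, d n = (r '' {k | k < sInf {k | r k = r n}}).ncard)

/-- Class P_ret of Balková et al.: a morphism injective on letters such that for some
palindrome `p` (the marker), each `f(a)p` is a palindrome beginning and ending in `p`
and containing exactly two occurrences of `p`. -/
def ClassPret {A B : Type*} (f : A → List B) : Prop :=
  (∀ a b : A, a ≠ b → f a ≠ f b) ∧
  ∃ p : List B, IsPalindrome p ∧ ∀ a,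
    IsPalindrome (f a ++ p) ∧ p <+: (f a ++ p) ∧ p <:+ (f a ++ p) ∧
      occCount p (f a ++ p) = 2

namespace RichAux

variable {A : Type*}

/-! ### Palindromic suffixes -/

lemma pal_suffix_prefix {p q : List A} (hp : IsPalindrome p) (hq : IsPalindrome q)
    (h : q <:+ p) : q <+: p := by
  have := List.reverse_prefix.mpr h
  rwa [hp, hq] at this

lemma suffix_of_suffix_length_le {v p w : List A} (h1 : v <:+ w) (h2 : p <:+ w)
    (h : v.length ≤ p.length) : v <:+ p := by
  rw [← List.reverse_prefix] at h1 h2 ⊢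
  exact List.prefix_of_prefix_length_le h1 h2 (by simpa)

lemma suffix_eq_of_length {v p w : List A} (h1 : v <:+ w) (h2 : p <:+ w)
    (h : v.length = p.length) : v = p :=
  (suffix_of_suffix_length_le h1 h2 h.le).eq_of_length h

/-- The set of palindromic factors of `w`. -/
def palSet (w : List A) : Set (List A) := {v | v <:+: w ∧ IsPalindrome v}

lemma palSet_finite (w : List A) : (palSet w).Finite :=
  (List.finite_toSet w.sublists).subset fun v hv => by
    simpa [List.mem_sublists] using hv.1.sublist

lemma palCount_eq (w : List A) : palCount w = (palSet w).ncard := rfl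

lemma exists_maxPalSuffix (w : List A) :
    ∃ p, p <:+ w ∧ IsPalindrome p ∧ ∀ q, q <:+ w → IsPalindrome q → q.length ≤ p.length := by
  classical
  have hfin : {q : List A | q <:+ w ∧ IsPalindrome q}.Finite :=
    (List.finite_toSet w.sublists).subset fun v hv => by
      simpa [List.mem_sublists] using hv.1.sublist
  have hne : {q : List A | q <:+ w ∧ IsPalindrome q}.Nonempty :=
    ⟨[], List.nil_suffix, rfl⟩
  obtain ⟨p, hpS, hmax⟩ := Set.Finite.exists_maximalFor List.length _ hfin hne
  refine ⟨p, hpS.1, hpS.2, fun q hq hqpal => ?_⟩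
  by_contra hlt
  push_neg at hlt
  exact absurd (hmax ⟨hq, hqpal⟩ hlt.le) (by omega)

lemma infix_dropLast_or_suffix {v w : List A} (h : v <:+: w) :
    v <:+: w.dropLast ∨ v <:+ w := by
  obtain ⟨s, t, rfl⟩ := h
  rcases eq_or_ne t [] with rfl | ht
  · right
    simpa using List.suffix_append s v
  · left
    refine ⟨s, t.dropLast, ?_⟩
    rw [List.append_assoc, List.dropLast_append_of_ne_nil ht, List.append_assoc]

lemma palSet_concat {l : List A} {a : A} {p : List A}
    (hp : p <:+ l ++ [a]) (hpal : IsPalindrome p)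
    (hmax : ∀ q, q <:+ l ++ [a] → IsPalindrome q → q.length ≤ p.length) :
    palSet (l ++ [a]) = insert p (palSet l) := by
  ext v
  constructor
  · rintro ⟨hinf, hv⟩
    rcases infix_dropLast_or_suffix hinf with h | h
    · rw [List.dropLast_concat] at h
      exact Or.inr ⟨h, hv⟩
    · rcases eq_or_ne v p with rfl | hne
      · exact Or.inl rfl
      have hle : v.length ≤ p.length := hmax v h hv
      have hlt : v.length < p.length := by
        rcases lt_or_eq_of_le hle with h' | h'
        · exact h'
        · exact absurd (suffix_eq_of_length h hp h') hne
      have hvp : v <:+ p := suffix_of_suffix_length_le h hp hle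
      have hvpre : v <+: p := pal_suffix_prefix hpal hv hvp
      obtain ⟨b, hb⟩ := hvpre
      obtain ⟨s, hs⟩ := hp
      have hbne : b ≠ [] := by
        rintro rfl
        exact hne (by simpa using hb)
      obtain ⟨b', c, hbc⟩ := b.eq_nil_or_concat.resolve_left hbne
      rw [List.concat_eq_append] at hbc
      subst hbc
      have key : (s ++ v ++ b') ++ [c] = l ++ [a] := by
        rw [← hs, ← hb]; simp [List.append_assoc]
      rw [← List.concat_eq_append, ← List.concat_eq_append, List.concat_inj] at key
      refine Or.inr ⟨⟨s, b', ?_⟩, hv⟩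
      exact key.1
  · rintro (rfl | ⟨hinf, hv⟩)
    · exact ⟨hp.isInfix, hpal⟩
    · exact ⟨hinf.trans (List.prefix_append l [a]).isInfix, hv⟩

lemma palSet_nil : palSet ([] : List A) = {[]} := by
  ext v
  simp only [palSet, Set.mem_setOf_eq, Set.mem_singleton_iff]
  constructor
  · rintro ⟨h, -⟩
    simpa using h.sublist
  · rintro rfl
    exact ⟨List.infix_refl _, rfl⟩

lemma palCount_nil : palCount ([] : List A) = 1 := by
  rw [palCount_eq, palSet_nil, Set.ncard_singleton]

lemma richList_nil : RichList ([] : List A) := by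
  simp [RichList, palCount_nil]

lemma palCount_le (w : List A) : palCount w ≤ w.length + 1 := by
  induction w using List.reverseRecOn with
  | nil => simp [palCount_nil]
  | append_singleton l a ih =>
    obtain ⟨p, hp, hpal, hmax⟩ := exists_maxPalSuffix (l ++ [a])
    rw [palCount_eq, palSet_concat hp hpal hmax]
    have := Set.ncard_insert_le p (palSet l)
    rw [← palCount_eq] at *
    simp only [List.length_append, List.length_singleton]
    omega

lemma richList_concat_iff {l : List A} {a : A} {p : List A}
    (hp : p <:+ l ++ [a]) (hpal : IsPalindrome p)
    (hmax : ∀ q, q <:+ l ++ [a] → IsPalindrome q → q.length ≤ p.length) :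
    RichList (l ++ [a]) ↔ RichList l ∧ p ∉ palSet l := by
  have hle := palCount_le l
  unfold RichList
  rw [palCount_eq (l ++ [a]), palSet_concat hp hpal hmax, List.length_append,
    List.length_singleton]
  by_cases hm : p ∈ palSet l
  · rw [Set.insert_eq_self.mpr hm, ← palCount_eq]
    constructor
    · intro h; omega
    · rintro ⟨-, hcon⟩; exact absurd hm hcon
  · rw [Set.ncard_insert_of_notMem hm (palSet_finite l), ← palCount_eq]
    constructor
    · intro h; exact ⟨by omega, hm⟩
    · rintro ⟨h, -⟩; omega

/-! ### Occurrences -/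

/-- `u` occurs in `w` at position `i`. -/
def OccIn (u w : List A) (i : ℕ) : Prop :=
  i + u.length ≤ w.length ∧ (w.drop i).take u.length = u

lemma occCount_eq (u w : List A) : occCount u w = {i | OccIn u w i}.ncard := rfl

lemma occIn_finite (u w : List A) : {i | OccIn u w i}.Finite :=
  (Set.finite_Iic w.length).subset fun i hi => by
    simp only [Set.mem_Iic]; have := hi.1; omega

lemma occIn_iff {u w : List A} {i : ℕ} :
    OccIn u w i ↔ ∃ s t : List A, s ++ u ++ t = w ∧ s.length = i := by
  constructor
  · rintro ⟨hle, heq⟩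
    refine ⟨w.take i, w.drop (i + u.length), ?_, by rw [List.length_take]; omega⟩
    have h2 : u ++ w.drop (i + u.length) = w.drop i := by
      conv_rhs => rw [← List.take_append_drop u.length (w.drop i)]
      rw [heq, List.drop_drop]
    rw [List.append_assoc, h2, List.take_append_drop]
  · rintro ⟨s, t, rfl, rfl⟩
    constructor
    · simp [List.length_append]
    · rw [List.append_assoc, List.drop_left, List.take_left]

lemma occIn_prefix {u w : List A} (h : u <+: w) : OccIn u w 0 :=
  occIn_iff.mpr ⟨[], h.choose, by simpa using h.choose_spec, rfl⟩

lemma occIn_suffix {u w : List A} (h : u <:+ w) : OccIn u w (w.length - u.length) := by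
  obtain ⟨s, rfl⟩ := h
  exact occIn_iff.mpr ⟨s, [], by simp, by simp⟩

lemma infix_iff_occIn {u w : List A} : u <:+: w ↔ ∃ i, OccIn u w i := by
  constructor
  · rintro ⟨s, t, h⟩
    exact ⟨s.length, occIn_iff.mpr ⟨s, t, h, rfl⟩⟩
  · rintro ⟨i, h⟩
    obtain ⟨s, t, h, -⟩ := occIn_iff.mp h
    exact ⟨s, t, h⟩

/-! ### Occurrences in the infinite word -/

lemma occursAt_append {s t : List A} {x : ℕ → A} {i : ℕ} :
    OccursAt (s ++ t) x i ↔ OccursAt s x i ∧ OccursAt t x (i + s.length) := by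
  unfold OccursAt
  rw [List.length_append, List.range_add, List.map_append, List.map_map]
  have hc : ((fun k => x (i + k)) ∘ fun k => s.length + k) = fun k => x (i + s.length + k) := by
    funext k
    simp [Function.comp]
    ring_nf
  rw [hc]
  constructor
  · intro h
    have := List.append_inj h (by simp)
    exact ⟨this.1, this.2⟩
  · rintro ⟨h1, h2⟩
    rw [h1, h2]

lemma isFactor_of_infix {u w : List A} {x : ℕ → A} (h : u <:+: w) (hw : IsFactor w x) :
    IsFactor u x := by
  obtain ⟨s, t, rfl⟩ := h
  obtain ⟨i, hi⟩ := hw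
  rw [List.append_assoc, occursAt_append] at hi
  rw [occursAt_append] at hi
  exact ⟨i + s.length, hi.2.1⟩

/-! ### Counting occurrences -/

lemma occIn_self_unique {u : List A} {i : ℕ} (h : OccIn u u i) : i = 0 := by
  have := h.1; omega

lemma occCount_self (u : List A) : occCount u u = 1 := by
  rw [occCount_eq]
  have : {i | OccIn u u i} = {0} := by
    ext i
    simp only [Set.mem_setOf_eq, Set.mem_singleton_iff]
    exact ⟨occIn_self_unique, by rintro rfl; exact occIn_prefix (List.prefix_refl u)⟩
  rw [this, Set.ncard_singleton]

lemma occIn_set_eq_pair {u w : List A} (hocc : occCount u w = 2)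
    {a b : ℕ} (ha : OccIn u w a) (hb : OccIn u w b) (hab : a ≠ b) :
    {i | OccIn u w i} = {a, b} := by
  refine (Set.eq_of_subset_of_ncard_le ?_ ?_ (occIn_finite u w)).symm
  · intro i hi
    rcases hi with rfl | hi
    · exact ha
    · rw [Set.mem_singleton_iff] at hi; subst hi; exact hb
  · rw [← occCount_eq, hocc, Set.ncard_pair hab]

lemma prefix_of_prefix_concat {u l : List A} {a : A} (h : u <+: l ++ [a])
    (hlen : u.length ≤ l.length) : u <+: l :=
  List.prefix_of_prefix_length_le h (List.prefix_append l [a]) hlen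

/-! ### Direction 1 : rich implies palindromic complete returns -/

lemma rich_dir1 {x : ℕ → A} (hrich : RichWord x) (u v : List A) (hu : IsPalindrome u)
    (hfr : FirstReturn u x v) : IsPalindrome (v ++ u) := by
  obtain ⟨hune, hfac, hpre, hocc⟩ := hfr
  have hulen : 0 < u.length := List.length_pos_iff.mpr hune
  have hvne : v ≠ [] := by
    rintro rfl
    rw [List.nil_append, occCount_self] at hocc
    omega
  have hvlen : 0 < v.length := List.length_pos_iff.mpr hvne
  obtain ⟨p, hp, hpal, hmax⟩ := exists_maxPalSuffix (v ++ u)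
  have husuf : u <:+ v ++ u := List.suffix_append v u
  have hwlen : (v ++ u).length = v.length + u.length := by simp
  have hS : {i | OccIn u (v ++ u) i} = {0, (v ++ u).length - u.length} := by
    refine occIn_set_eq_pair hocc (occIn_prefix hpre) (occIn_suffix husuf) ?_
    omega
  have h1 : u.length ≤ p.length := hmax u husuf hu
  have hplen : p.length ≤ (v ++ u).length := hp.length_le
  have h2 : u <:+ p := suffix_of_suffix_length_le husuf hp h1
  have h3 : u <+: p := pal_suffix_prefix hpal hu h2
  obtain ⟨b, hb⟩ := h3
  have hpcopy := hp
  obtain ⟨s, hs⟩ := hpcopy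
  have h4 : OccIn u (v ++ u) ((v ++ u).length - p.length) := by
    refine occIn_iff.mpr ⟨s, b, ?_, ?_⟩
    · rw [List.append_assoc, hb, hs]
    · have : s.length + p.length = (v ++ u).length := by
        rw [← hs]; simp
      omega
  have h5 : ((v ++ u).length - p.length) ∈ ({0, (v ++ u).length - u.length} : Set ℕ) :=
    hS ▸ h4
  simp only [Set.mem_insert_iff, Set.mem_singleton_iff] at h5
  rcases h5 with h5 | h5
  · have hlen : p.length = (v ++ u).length := by omega
    have := suffix_eq_of_length hp (List.suffix_refl _) hlen
    rwa [← this]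
  · exfalso
    have hlen : p.length = u.length := by omega
    have hpu : p = u := suffix_eq_of_length hp husuf hlen
    obtain ⟨l, a, hla⟩ := (v ++ u).eq_nil_or_concat.resolve_left (by simp [hune])
    rw [List.concat_eq_append] at hla
    have hrw : RichList (v ++ u) := hrich _ hfac
    rw [hla] at hrw hp hmax
    have hnm : p ∉ palSet l := ((richList_concat_iff hp hpal hmax).mp hrw).2
    apply hnm
    have hllen : l.length + 1 = v.length + u.length := by
      have := congrArg List.length hla
      simp at this
      omega
    have hupre : u <+: l := by
      refine prefix_of_prefix_concat (hla ▸ hpre) ?_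
      omega
    rw [hpu]
    exact ⟨hupre.isInfix, hu⟩

/-! ### Direction 2 : palindromic complete returns implies rich -/

lemma rich_dir2 {x : ℕ → A}
    (h : ∀ u v : List A, IsPalindrome u → FirstReturn u x v → IsPalindrome (v ++ u)) :
    RichWord x := by
  intro w
  induction w using List.reverseRecOn with
  | nil => exact fun _ => richList_nil
  | append_singleton l a ih =>
    intro hw
    have hl : IsFactor l x := isFactor_of_infix (List.prefix_append l [a]).isInfix hw
    obtain ⟨p, hp, hpal, hmax⟩ := exists_maxPalSuffix (l ++ [a])
    rw [richList_concat_iff hp hpal hmax]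
    refine ⟨ih hl, fun hmem => ?_⟩
    obtain ⟨hinf, -⟩ := hmem
    have hplen : 1 ≤ p.length := hmax [a] (List.suffix_append l [a]) (by rfl)
    have hpne : p ≠ [] := by
      intro hpe; rw [hpe] at hplen; simp at hplen
    have hWlen : (l ++ [a]).length = l.length + 1 := by simp
    have hpw : p.length ≤ l.length + 1 := by
      have := hp.length_le; omega
    obtain ⟨i₀, hi₀⟩ := infix_iff_occIn.mp hinf
    have hi₀w : OccIn p (l ++ [a]) i₀ := by
      obtain ⟨s, t, hst, hslen⟩ := occIn_iff.mp hi₀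
      exact occIn_iff.mpr ⟨s, t ++ [a], by rw [← List.append_assoc, hst], hslen⟩
    have hi₀lt : i₀ < (l ++ [a]).length - p.length := by
      have := hi₀.1; omega
    set T := {i | OccIn p (l ++ [a]) i ∧ i < (l ++ [a]).length - p.length} with hT
    have hbdd : BddAbove T := ⟨(l ++ [a]).length, fun i hi => by
      have := hi.1.1; omega⟩
    have hjmem : sSup T ∈ T := Nat.sSup_mem ⟨i₀, hi₀w, hi₀lt⟩ hbdd
    set j := sSup T with hj
    obtain ⟨hjocc, hjlt⟩ := hjmem
    have hjmax : ∀ i, OccIn p (l ++ [a]) i → i < (l ++ [a]).length - p.length → i ≤ j :=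
      fun i h1 h2 => le_csSup hbdd ⟨h1, h2⟩
    have hdroplen : ((l ++ [a]).drop j).length = (l ++ [a]).length - j := List.length_drop
    have hpq : p <:+ (l ++ [a]).drop j := by
      refine suffix_of_suffix_length_le hp (List.drop_suffix j _) ?_
      omega
    obtain ⟨v, hv⟩ := hpq
    have hvplen : v.length + p.length = (l ++ [a]).length - j := by
      have := congrArg List.length hv
      simpa using this
    have hvpos : 0 < v.length := by omega
    have hppre : p <+: v ++ p := by
      rw [List.prefix_iff_eq_take, hv]
      exact hjocc.2.symm
    have hfrp : FirstReturn p x v := by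
      refine ⟨hpne, ?_, hppre, ?_⟩
      · have : v ++ p <:+ l ++ [a] := by rw [hv]; exact List.drop_suffix j _
        exact isFactor_of_infix this.isInfix hw
      · rw [occCount_eq]
        have hset : {i | OccIn p (v ++ p) i} = {0, v.length} := by
          ext i
          simp only [Set.mem_setOf_eq, Set.mem_insert_iff, Set.mem_singleton_iff]
          constructor
          · rintro ⟨hile, hitake⟩
            have hile' : i + p.length ≤ v.length + p.length := by
              simpa using hile
            have hiW : OccIn p (l ++ [a]) (j + i) := by
              refine ⟨by omega, ?_⟩
              rw [← List.drop_drop, ← hv]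
              exact hitake
            rcases lt_or_ge (j + i) ((l ++ [a]).length - p.length) with hlt | hge
            · have := hjmax _ hiW hlt
              left; omega
            · right; omega
          · rintro (rfl | rfl)
            · exact occIn_prefix hppre
            · have := occIn_suffix (List.suffix_append v p)
              simpa using this
        rw [hset, Set.ncard_pair (by omega : (0:ℕ) ≠ v.length)]
    have hpalvp : IsPalindrome (v ++ p) := h p v hpal hfrp
    have hle : (v ++ p).length ≤ p.length := by
      refine hmax (v ++ p) ?_ hpalvp
      rw [hv]; exact List.drop_suffix j _
    simp only [List.length_append] at hle
    omega

end RichAux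

/-- An infinite word is rich if and only if every complete first return
to a palindromic factor is itself a palindrome. -/
theorem rich_iff_palindromic_returns {A : Type*} (x : ℕ → A) :
    RichWord x ↔
      ∀ u v : List A, IsPalindrome u → FirstReturn u x v → IsPalindrome (v ++ u) := by
  constructor
  · intro hrich u v hu hfr
    exact RichAux.rich_dir1 hrich u v hu hfr
  · exact RichAux.rich_dir2
end

section
/- Class P is not closed under composition: the morphisms f : 0 ↦ 0, 1 ↦ 01 and g : 0 ↦ 01, 1 ↦ 011 on the alphabet {0, 1} are both of class P, but their composition g∘f : 0 ↦ 01, 1 ↦ 01011 is not of class P. -/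
open List

/-- Class P is not closed under composition: `f : 0 ↦ 0, 1 ↦ 01` and
`g : 0 ↦ 01, 1 ↦ 011` are of class P, but `g ∘ f : 0 ↦ 01, 1 ↦ 01011` is not. -/
theorem classP_not_closed_comp :
    ClassP (![[0], [0, 1]] : Fin 2 → List (Fin 2)) ∧
    ClassP (![[0, 1], [0, 1, 1]] : Fin 2 → List (Fin 2)) ∧
    ¬ ClassP (fun a : Fin 2 =>
        listApply (![[0, 1], [0, 1, 1]] : Fin 2 → List (Fin 2))
          ((![[0], [0, 1]] : Fin 2 → List (Fin 2)) a)) := by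
  refine ⟨⟨[0], rfl, ?_⟩, ⟨[0], rfl, ?_⟩, ?_⟩
  · intro a; fin_cases a
    · exact ⟨[], rfl, rfl⟩
    · exact ⟨[1], rfl, rfl⟩
  · intro a; fin_cases a
    · exact ⟨[1], rfl, rfl⟩
    · exact ⟨[1, 1], rfl, rfl⟩
  · rintro ⟨p, hp, h⟩
    obtain ⟨q0, hq0, e0⟩ := h 0
    obtain ⟨q1, hq1, e1⟩ := h 1
    simp only [listApply, Matrix.cons_val_zero, Matrix.cons_val_one, Matrix.head_cons,
      List.flatMap_cons, List.flatMap_nil, List.append_nil] at e0 e1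
    rcases p with _ | ⟨a, _ | ⟨b, t⟩⟩
    · simp only [List.nil_append] at e0
      rw [← e0] at hq0
      simp [IsPalindrome] at hq0
    · simp only [List.cons_append, List.cons.injEq] at e0
      obtain ⟨rfl, e0⟩ := e0
      simp only [List.cons_append, List.cons.injEq, List.nil_append] at e1
      obtain ⟨_, e1⟩ := e1
      rw [← e1] at hq1
      simp [IsPalindrome] at hq1
    · simp only [List.cons_append, List.cons.injEq] at e0
      obtain ⟨rfl, rfl, e0⟩ := e0
      have ht : t = [] := by
        cases t with
        | nil => rfl
        | cons c s => simp at e0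
      subst ht
      simp only [List.nil_append] at e0
      simp only [List.cons_append, List.nil_append, List.cons.injEq] at e1
      obtain ⟨_, _, e1⟩ := e1
      rw [← e1] at hq1
      simp [IsPalindrome] at hq1
end

section
/- Every morphism in class P_ret belongs to class P'; that is, every class P_ret morphism is conjugate to some class P morphism. -/
open List

lemma occCount_self_eq_one {A : Type*} (p : List A) (hp : p ≠ []) : occCount p p = 1 := by
  unfold occCount
  have : {i : ℕ | i + p.length ≤ p.length ∧ (p.drop i).take p.length = p} = {0} := by
    ext i
    simp only [Set.mem_setOf_eq, Set.mem_singleton_iff]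
    constructor
    · rintro ⟨h1, -⟩
      have : p.length ≠ 0 := fun h => hp (List.length_eq_zero_iff.mp h)
      omega
    · rintro rfl
      simp
  rw [this, Set.ncard_singleton]

lemma isPalindrome_of_len_le_one {A : Type*} (l : List A) (h : l.length ≤ 1) :
    IsPalindrome l := by
  match l, h with
  | [], _ => rfl
  | [x], _ => rfl

/-- Every class P_ret morphism belongs to class P', i.e. is conjugate to
some class P morphism. -/
theorem classPret_subset_classP' {A B : Type*} (f : A → List B) (hf : ClassPret f) :
    ClassP' f := by
  obtain ⟨-, p, hp, hall⟩ := hf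
  set n := p.length with hn
  set h := n / 2 with hh
  set u := p.take h with hu
  set c := (p.take (n - h)).drop h with hc
  -- every image has length ≥ n % 2
  have hfa_len : ∀ a, n % 2 ≤ (f a).length := by
    intro a
    by_contra hcon
    push_neg at hcon
    have h1 : n % 2 = 1 := by omega
    have h2 : f a = [] := List.length_eq_zero_iff.mp (by omega)
    have hocc := (hall a).2.2.2
    rw [h2, List.nil_append] at hocc
    have hp0 : p ≠ [] := fun hz => by simp [hz, hn] at h1
    rw [occCount_self_eq_one p hp0] at hocc
    omega
  have hclen : c.length ≤ 1 := by
    rw [hc]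
    simp only [List.length_drop, List.length_take]
    omega
  -- key palindromic identity : f a ++ p = p ++ (f a).reverse
  have hwp : ∀ a, f a ++ p = p ++ (f a).reverse := by
    intro a
    calc f a ++ p = (f a ++ p).reverse := ((hall a).1).symm
      _ = p.reverse ++ (f a).reverse := List.reverse_append
      _ = p ++ (f a).reverse := by rw [hp]
  refine ⟨fun a => c ++ (((f a ++ p).take ((f a).length + h)).drop (n - h)),
    ⟨c, isPalindrome_of_len_le_one c hclen, fun a => ⟨_, ?_, rfl⟩⟩,
    u, Or.inl fun a => ?_⟩
  · -- the tail q_a is a palindrome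
    set w := f a ++ p with hw
    have hwlen : w.length = (f a).length + n := by simp [hw, hn]
    have hwpal : w.reverse = w := (hall a).1
    have e1 : ((w.take ((f a).length + h)).drop (n - h)).reverse
        = ((w.drop (n - h)).take ((f a).length + h - (n - h))) := by
      rw [List.reverse_drop, List.reverse_take, hwpal, List.length_take, hwlen,
        show ((f a).length + h) ⊓ ((f a).length + n) = (f a).length + h from by omega,
        show (f a).length + n - ((f a).length + h) = n - h from by omega]
    show (_ : List B).reverse = _
    rw [e1, List.drop_take]
  · -- conjugation identity : f a ++ u = u ++ (c ++ q_a)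
    have key1 : f a ++ u = (f a ++ p).take ((f a).length + h) := by
      rw [List.take_append, hu, List.take_of_length_le (l := f a) (by omega), Nat.add_sub_cancel_left]
    have key2 : u ++ c = p.take (n - h) := by
      rw [hu, hc]
      have : p.take h = (p.take (n - h)).take h := by
        rw [List.take_take]
        congr 1
        omega
      rw [this, List.take_append_drop]
    have key3 : p.take (n - h) = (f a ++ p).take (n - h) := by
      rw [hwp a, List.take_append_of_le_length (by omega)]
    have key4 : (f a ++ p).take (n - h)
        = ((f a ++ p).take ((f a).length + h)).take (n - h) := by
      rw [List.take_take]
      congr 1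
      have := hfa_len a
      omega
    rw [key1, ← List.append_assoc, key2, key3, key4, List.take_append_drop]
end
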